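/- For every real α > 1 there exists a constant Δ_α > 0 such that for all γ ≥ 2, the supremum over x ∈ [0,1] of x^{1/2}·(log(1/x))^α − γ·x² is at most Δ_α · γ^{−1/3} · (log γ)^{4α/3}. -/

import Mathlib

open Real Set

theorem stmt_0 (α : ℝ) (hα : 1 < α) :
    ∃ Δ : ℝ, 0 < Δ ∧ ∀ γ : ℝ, 2 ≤ γ →
      sSup ((fun x : ℝ => x ^ ((1:ℝ)/2) * (Real.log (1/x)) ^ α - γ * x ^ 2) '' Set.Icc 0 1)
        ≤ Δ * γ ^ (-(1:ℝ)/3) * (Real.log γ) ^ (4*α/3) := by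
  have hα0 : (0:ℝ) < α := by linarith
  set q : ℝ := 4*α/3 with hq
  have hq0 : 0 < q := by positivity
  have hlog2 : (0:ℝ) < Real.log 2 := Real.log_pos (by norm_num)
  refine ⟨(4*α)^α * (Real.log 2)^(-q) + 4^q, by positivity, ?_⟩
  intro γ hγ
  have hγ0 : (0:ℝ) < γ := by linarith
  have hγ1 : (1:ℝ) < γ := by linarith
  have hlogγ : 0 < Real.log γ := Real.log_pos hγ1
  have hlogγ2 : Real.log 2 ≤ Real.log γ := Real.log_le_log (by norm_num) hγ
  have hB0 : 0 ≤ ((4*α)^α * (Real.log 2)^(-q) + 4^q) * γ ^ (-(1:ℝ)/3) * (Real.log γ) ^ q := by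
    positivity
  apply Real.sSup_le _ hB0
  rintro y ⟨x, ⟨hx0, hx1⟩, rfl⟩
  simp only
  by_cases hneg : x ^ ((1:ℝ)/2) * (Real.log (1/x)) ^ α - γ * x ^ 2 ≤ 0
  · exact hneg.trans hB0
  push_neg at hneg
  have hx0' : 0 < x := by
    rcases hx0.lt_or_eq with h | h
    · exact h
    · exfalso
      rw [← h] at hneg
      norm_num at hneg
  have hL0 : 0 ≤ Real.log (1/x) := by
    apply Real.log_nonneg
    rw [le_div_iff₀ hx0']; linarith
  by_cases hcase : x ≤ γ ^ (-(4:ℝ))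
  · -- small x regime
    have hε : Real.log (1/x) ≤ 4*α * x ^ (-(1/(4*α))) := by
      have h1 : Real.log ((1/x) ^ (1/(4*α))) = (1/(4*α)) * Real.log (1/x) :=
        Real.log_rpow (by positivity) _
      have h2 : Real.log ((1/x) ^ (1/(4*α))) ≤ (1/x) ^ (1/(4*α)) :=
        Real.log_le_self (by positivity)
      have h3 : ((1:ℝ)/x) ^ (1/(4*α)) = x ^ (-(1/(4*α))) := by
        rw [one_div, ← Real.rpow_neg_one x, ← Real.rpow_mul hx0'.le]
        ring_nf
      rw [h1, h3] at h2
      have h4 : (0:ℝ) < 4*α := by linarith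
      calc Real.log (1/x) = (4*α) * ((1/(4*α)) * Real.log (1/x)) := by
            field_simp
        _ ≤ (4*α) * x ^ (-(1/(4*α))) := by
            apply mul_le_mul_of_nonneg_left h2 h4.le
    have key : x ^ ((1:ℝ)/2) * (Real.log (1/x)) ^ α ≤ (4*α)^α * x ^ ((1:ℝ)/4) := by
      have h1 : (Real.log (1/x)) ^ α ≤ (4*α * x ^ (-(1/(4*α)))) ^ α :=
        Real.rpow_le_rpow hL0 hε hα0.le
      have h2 : (4*α * x ^ (-(1/(4*α)))) ^ α = (4*α)^α * x ^ (-(1/(4:ℝ))) := by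
        rw [Real.mul_rpow (by positivity) (by positivity), ← Real.rpow_mul hx0'.le]
        congr 2
        field_simp
      calc x ^ ((1:ℝ)/2) * (Real.log (1/x)) ^ α
          ≤ x ^ ((1:ℝ)/2) * ((4*α)^α * x ^ (-(1/(4:ℝ)))) := by
            rw [← h2]; exact mul_le_mul_of_nonneg_left h1 (by positivity)
        _ = (4*α)^α * (x ^ ((1:ℝ)/2) * x ^ (-(1/(4:ℝ)))) := by ring
        _ = (4*α)^α * x ^ ((1:ℝ)/4) := by
            rw [← Real.rpow_add hx0']; norm_num
    have hx14 : x ^ ((1:ℝ)/4) ≤ γ ^ (-(1:ℝ)/3) := by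
      calc x ^ ((1:ℝ)/4) ≤ (γ ^ (-(4:ℝ))) ^ ((1:ℝ)/4) :=
            Real.rpow_le_rpow hx0 hcase (by norm_num)
        _ = γ ^ (-(1:ℝ)) := by
            rw [← Real.rpow_mul hγ0.le]; norm_num
        _ ≤ γ ^ (-(1:ℝ)/3) := by
            apply Real.rpow_le_rpow_of_exponent_le hγ1.le
            norm_num
    have hone : 1 ≤ (Real.log 2)^(-q) * (Real.log γ)^q := by
      have h2 : (Real.log 2)^q ≤ (Real.log γ)^q :=
        Real.rpow_le_rpow hlog2.le hlogγ2 hq0.le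
      calc (1:ℝ) = ((Real.log 2)^q)⁻¹ * (Real.log 2)^q :=
            (inv_mul_cancel₀ (by positivity)).symm
        _ ≤ ((Real.log 2)^q)⁻¹ * (Real.log γ)^q :=
            mul_le_mul_of_nonneg_left h2 (by positivity)
        _ = (Real.log 2)^(-q) * (Real.log γ)^q := by
            rw [Real.rpow_neg hlog2.le]
    have hA : (0:ℝ) < (4*α)^α := by positivity
    have hγ13 : (0:ℝ) < γ ^ (-(1:ℝ)/3) := by positivity
    calc x ^ ((1:ℝ)/2) * (Real.log (1/x)) ^ α - γ * x ^ 2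
        ≤ x ^ ((1:ℝ)/2) * (Real.log (1/x)) ^ α := by nlinarith [sq_nonneg x]
      _ ≤ (4*α)^α * x ^ ((1:ℝ)/4) := key
      _ ≤ (4*α)^α * γ ^ (-(1:ℝ)/3) := mul_le_mul_of_nonneg_left hx14 hA.le
      _ = ((4*α)^α * γ ^ (-(1:ℝ)/3)) * 1 := by ring
      _ ≤ ((4*α)^α * γ ^ (-(1:ℝ)/3)) * ((Real.log 2)^(-q) * (Real.log γ)^q) := by
            apply mul_le_mul_of_nonneg_left hone (by positivity)
      _ = ((4*α)^α * (Real.log 2)^(-q)) * γ ^ (-(1:ℝ)/3) * (Real.log γ)^q := by ring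
      _ ≤ ((4*α)^α * (Real.log 2)^(-q) + 4^q) * γ ^ (-(1:ℝ)/3) * (Real.log γ)^q := by
            have h4q : (0:ℝ) ≤ 4^q * γ ^ (-(1:ℝ)/3) * (Real.log γ)^q := by positivity
            rw [add_mul, add_mul]
            linarith
  · -- large x regime
    push_neg at hcase
    have hx1' : x < 1 := by
      rcases hx1.lt_or_eq with h | h
      · exact h
      · exfalso
        rw [h] at hneg
        simp only [one_div, inv_one, Real.log_one] at hneg
        rw [Real.zero_rpow hα0.ne'] at hneg
        nlinarith
    have hLpos : 0 < Real.log (1/x) := by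
      apply Real.log_pos
      rw [lt_div_iff₀ hx0']; linarith
    set L := Real.log (1/x) with hLdef
    -- γ * x^{3/2} < L^α
    have hstep : γ * x ^ ((3:ℝ)/2) < L ^ α := by
      have hx2 : (x:ℝ) ^ 2 = x ^ ((3:ℝ)/2) * x ^ ((1:ℝ)/2) := by
        rw [← Real.rpow_add hx0']
        norm_num
      have h5 : γ * (x ^ ((3:ℝ)/2) * x ^ ((1:ℝ)/2)) < x ^ ((1:ℝ)/2) * L ^ α := by
        rw [← hx2]; linarith
      have hx12 : (0:ℝ) < x ^ ((1:ℝ)/2) := by positivity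
      rw [show γ * (x ^ ((3:ℝ)/2) * x ^ ((1:ℝ)/2)) = (γ * x ^ ((3:ℝ)/2)) * x ^ ((1:ℝ)/2) by ring,
        show x ^ ((1:ℝ)/2) * L ^ α = L ^ α * x ^ ((1:ℝ)/2) by ring] at h5
      exact lt_of_mul_lt_mul_right h5 hx12.le
    have hx32 : x ^ ((3:ℝ)/2) ≤ L ^ α / γ := by
      rw [le_div_iff₀ hγ0]
      nlinarith
    have h12 : x ^ ((1:ℝ)/2) ≤ L ^ (α/3) * γ ^ (-(1:ℝ)/3) := by
      have h := Real.rpow_le_rpow (by positivity) hx32 (by norm_num : (0:ℝ) ≤ 1/3)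
      rw [← Real.rpow_mul hx0'.le] at h
      norm_num at h
      calc x ^ ((1:ℝ)/2) ≤ (L ^ α / γ) ^ ((1:ℝ)/3) := h
        _ = L ^ (α/3) * γ ^ (-(1:ℝ)/3) := by
            rw [Real.div_rpow (by positivity) hγ0.le, ← Real.rpow_mul hLpos.le,
              div_eq_mul_inv, ← Real.rpow_neg hγ0.le]
            ring_nf
    have hgx : -4 * Real.log γ < Real.log x := by
      have h := Real.log_lt_log (by positivity : (0:ℝ) < γ ^ (-(4:ℝ))) hcase
      rwa [Real.log_rpow hγ0] at h
    have hL4 : L ≤ 4 * Real.log γ := by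
      have hLx : L = -Real.log x := by rw [hLdef, one_div, Real.log_inv]
      linarith
    have hLq : L ^ q ≤ 4 ^ q * (Real.log γ) ^ q := by
      calc L ^ q ≤ (4 * Real.log γ) ^ q := Real.rpow_le_rpow hLpos.le hL4 hq0.le
        _ = 4 ^ q * (Real.log γ) ^ q := Real.mul_rpow (by norm_num) hlogγ.le
    have hLa : (0:ℝ) ≤ L ^ α := by positivity
    calc x ^ ((1:ℝ)/2) * L ^ α - γ * x ^ 2
        ≤ x ^ ((1:ℝ)/2) * L ^ α := by nlinarith [sq_nonneg x]
      _ ≤ (L ^ (α/3) * γ ^ (-(1:ℝ)/3)) * L ^ α := mul_le_mul_of_nonneg_right h12 hLa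
      _ = γ ^ (-(1:ℝ)/3) * (L ^ (α/3) * L ^ α) := by ring
      _ = γ ^ (-(1:ℝ)/3) * L ^ q := by
            rw [← Real.rpow_add hLpos]
            congr 1
            rw [hq]; ring
      _ ≤ γ ^ (-(1:ℝ)/3) * (4 ^ q * (Real.log γ) ^ q) :=
            mul_le_mul_of_nonneg_left hLq (by positivity)
      _ = 4 ^ q * γ ^ (-(1:ℝ)/3) * (Real.log γ) ^ q := by ring
      _ ≤ ((4*α)^α * (Real.log 2)^(-q) + 4^q) * γ ^ (-(1:ℝ)/3) * (Real.log γ) ^ q := by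
            have hpos : (0:ℝ) ≤ (4*α)^α * (Real.log 2)^(-q) * γ ^ (-(1:ℝ)/3) * (Real.log γ) ^ q := by
              positivity
            rw [add_mul, add_mul]
            linarith
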